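/- arXiv:1711.07059 — 15 statements merged into one kernel-verified Lean document; each statement's English description precedes it below -/
import Mathlib

section
/- The view functor V : Lens → Set (defined by V(X,S) = X on objects and V(λ) = v_λ on lenses) is a Grothendieck fibration. Explicitly, for every function f : X → Y and every diset (Y,R), the lens f̄ : (X,R) → (Y,R) with view f and update (x,r) ↦ r is a cartesian lift of f: for every lens λ : (W,T) → (Y,R) and every function g : W → X with v_λ = f ∘ g, there is a unique lens μ : (W,T) → (X,R) with v_μ = g and f̄ ∘ μ = λ. -/
/-- A lens between 'disets' `(X, S)` and `(Y, R)`: a view function `X → Y` and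
an update function `X × R → S`. -/
structure Lens (X S Y R : Type) where
  v : X → Y
  u : X → R → S

namespace Lens

/-- The identity lens on the diset `(X, S)`. -/
def id (X S : Type) : Lens X S X S := ⟨fun x => x, fun _ s => s⟩

/-- Composition of lenses: `m.comp l` is "first `l`, then `m`". -/
def comp {X S Y R Z Q : Type} (m : Lens Y R Z Q) (l : Lens X S Y R) : Lens X S Z Q :=
  ⟨fun x => m.v (l.v x), fun x q => l.u x (m.u (l.v x) q)⟩

theorem comp_assoc {X S Y R Z Q W T : Type} (c : Lens Z Q W T) (b : Lens Y R Z Q)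
    (a : Lens X S Y R) : (c.comp b).comp a = c.comp (b.comp a) := rfl

/-- The action of the continuation functor `K` on a lens. -/
def K {X S Y R : Type} (l : Lens X S Y R) (k : Y → R) : X → S :=
  fun x => l.u x (k (l.v x))

theorem K_comp {X S Y R Z Q : Type} (m : Lens Y R Z Q) (l : Lens X S Y R) (k : Z → Q) :
    (m.comp l).K k = l.K (m.K k) := rfl

/-- The tensor (monoidal product) of lenses. -/
def tensor {X S Y R X' S' Y' R' : Type} (l : Lens X S Y R) (l' : Lens X' S' Y' R') :
    Lens (X × X') (S × S') (Y × Y') (R × R') :=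
  ⟨fun p => (l.v p.1, l'.v p.2), fun p r => (l.u p.1 r.1, l'.u p.2 r.2)⟩

end Lens

/-- The view functor `V : Lens → Set` is a Grothendieck fibration: for every function
`f : X → Y` and diset `(Y, R)`, the lens `f̄ : (X, R) → (Y, R)` with view `f` and update
`(x, r) ↦ r` is a cartesian lift of `f`: for every lens `l : (W, T) → (Y, R)` and every
function `g : W → X` with `v_l = f ∘ g`, there is a unique lens `μ : (W, T) → (X, R)` with
`v_μ = g` and `f̄ ∘ μ = l`. -/
theorem view_functor_is_fibration (X Y R : Type) (f : X → Y) :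
    ∀ (W T : Type) (l : Lens W T Y R) (g : W → X), l.v = f ∘ g →
      ∃! μ : Lens W T X R, μ.v = g ∧
        (Lens.mk f (fun _ r => r)).comp μ = l := by
  intro W T l g hv
  refine ⟨⟨g, l.u⟩, ⟨rfl, ?_⟩, ?_⟩
  · cases l with
    | mk lv lu => simp [Lens.comp] at hv ⊢; exact (funext fun x => (congrFun hv x).symm)
  · rintro ⟨mv, mu⟩ ⟨h1, h2⟩
    cases l with
    | mk lv lu =>
      simp [Lens.comp, Lens.mk.injEq] at h1 h2 ⊢
      exact ⟨h1, funext fun w => funext fun t => congrFun (congrFun h2.2 w) t⟩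
end

section
/- The functor ⟨V,K⟩ : Lens → Set × Setᵒᵖ, sending a diset (X,S) to the pair (X, X → S) and a lens λ : (X,S) → (Y,R) to the pair (v_λ, K(λ)), is left adjoint to the identity-on-objects functor (-,-) : Set × Setᵒᵖ → Lens that sends a pair of functions (f : X → Y, g : R → S) to the lens with view f and update g ∘ π₂. Explicitly, there is a bijection Hom_{Set×Setᵒᵖ}((X, X → S), (Y, R)) ≅ Hom_Lens((X,S), (Y,R)), natural in (X,S) and (Y,R). -/
/-- The hom-set map `Hom_{Set×Setᵒᵖ}((X, X → S), (Y, R)) → Hom_Lens((X,S), (Y,R))`: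
a pair `(f : X → Y, g : R → (X → S))` is sent to the lens with view `f` and update
`(x, r) ↦ g r x`. -/
def pairToLens (X S Y R : Type) : ((X → Y) × (R → X → S)) → Lens X S Y R :=
  fun fg => ⟨fg.1, fun x r => fg.2 r x⟩

/-- The functor `⟨V,K⟩ : Lens → Set × Setᵒᵖ`, `(X,S) ↦ (X, X → S)`, `λ ↦ (v_λ, K(λ))`, is
left adjoint to the functor `(-,-) : Set × Setᵒᵖ → Lens`, `(f, g) ↦ (f, g ∘ π₂)`:
there is a bijection `Hom_{Set×Setᵒᵖ}((X, X → S), (Y, R)) ≅ Hom_Lens((X,S), (Y,R))`,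
natural in `(X,S)` (via precomposition with `⟨V,K⟩` of a lens) and in `(Y,R)`
(via postcomposition with the lens `(-,-)(p,q)`). -/
theorem viewK_left_adjoint_to_pairing :
    (∀ X S Y R : Type, Function.Bijective (pairToLens X S Y R)) ∧
    (∀ (X S Y R X' S' : Type) (l : Lens X' S' X S) (fg : (X → Y) × (R → X → S)),
      pairToLens X' S' Y R (fg.1 ∘ l.v, fun r => l.K (fg.2 r)) =
        (pairToLens X S Y R fg).comp l) ∧
    (∀ (X S Y R Y' R' : Type) (p : Y → Y') (q : R' → R) (fg : (X → Y) × (R → X → S)),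
      pairToLens X S Y' R' (p ∘ fg.1, fun r' => fg.2 (q r')) =
        (Lens.mk p (fun _ r' => q r')).comp (pairToLens X S Y R fg)) := by
  refine ⟨fun X S Y R => ?_, fun _ _ _ _ _ _ _ _ => rfl, fun _ _ _ _ _ _ _ _ _ => rfl⟩
  constructor
  · rintro ⟨f, g⟩ ⟨f', g'⟩ h
    simp only [pairToLens, Lens.mk.injEq] at h
    obtain ⟨h1, h2⟩ := h
    refine Prod.ext h1 ?_
    funext r x
    exact congrFun (congrFun h2 x) r
  · rintro ⟨v, u⟩
    exact ⟨(v, fun r x => u x r), rfl⟩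
end

section
/- In the category Lens, for any family of disets (X_i, S_i)_{i∈I}, the diset (∏_{i∈I} X_i, ∐_{i∈I} S_i) together with the projection lenses π_j : (∏_i X_i, ∐_i S_i) → (X_j, S_j), with view the j-th product projection and update (x, s) ↦ ι_j(s), is a categorical product of the family: for every diset (W,T) and every family of lenses λ_j : (W,T) → (X_j, S_j) there is a unique lens μ : (W,T) → (∏_i X_i, ∐_i S_i) with π_j ∘ μ = λ_j for all j. -/
/-- In `Lens`, the diset `(∏ i, X i, ∐ i, S i)` with the projection lenses
`π j = (x ↦ x j, (x, s) ↦ ι_j s)` is a categorical product of the family `((X i, S i))_i`: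
for every diset `(W, T)` and family of lenses `l j : (W, T) → (X j, S j)` there is a
unique lens `μ : (W, T) → (∏ i, X i, ∐ i, S i)` with `π j ∘ μ = l j` for all `j`. -/
theorem lens_products (I : Type) (X : I → Type) (S : I → Type) :
    ∀ (W T : Type) (l : ∀ j : I, Lens W T (X j) (S j)),
      ∃! μ : Lens W T (∀ i : I, X i) (Σ i : I, S i),
        ∀ j : I, (Lens.mk (fun (x : ∀ i : I, X i) => x j)
          (fun _ (s : S j) => (⟨j, s⟩ : Σ i : I, S i))).comp μ = l j := by

  intro W T l
  refine ⟨⟨fun w j => (l j).v w, fun w σ => (l σ.1).u w σ.2⟩, fun j => rfl, ?_⟩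
  intro μ' h
  cases μ' with
  | mk v u =>
    congr 1
    · funext w
      funext j
      exact congrArg (fun t => t.v w) (h j)
    · funext w σ
      cases σ with
      | mk j s => exact congrArg (fun t => t.u w s) (h j)
end

section
/- Let G : Φ ⇸ Ψ, H : Ψ ⇸ Θ, G' : Φ' ⇸ Ψ', H' : Ψ' ⇸ Θ' be open games, and let α : G → G' and β : H → H' be morphisms of open games with t(α) = s(β). Then the data s(β⊙α) = s(α), t(β⊙α) = t(β), Σ(β⊙α) = Σ(α) × Σ(β) satisfies both morphism axioms, giving a morphism of open games β⊙α : H⊙G → H'⊙G'. -/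
/-- An open game `G : (X,S) ⇸ (Y,R)`: a set of strategy profiles, a lens for each
strategy profile, and a best-response relation for each context `(h, k)`. -/
structure OpenGame (X S Y R : Type) where
  Strat : Type
  play : Strat → Lens X S Y R
  B : X → (Y → R) → Strat → Strat → Prop

namespace OpenGame

/-- A state of an open game over a continuation `k`: a strategy profile `σ` with
`(σ,σ) ∈ B(h,k)` for every history `h`. -/
def IsState {X S Y R : Type} (G : OpenGame X S Y R) (σ : G.Strat) (k : Y → R) : Prop :=
  ∀ h : X, G.B h k σ σ

/-- Sequential composition `H ⊙ G` of open games. -/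
def seq {X S Y R Z Q : Type} (G : OpenGame X S Y R) (H : OpenGame Y R Z Q) :
    OpenGame X S Z Q where
  Strat := G.Strat × H.Strat
  play := fun p => (H.play p.2).comp (G.play p.1)
  B := fun h k p p' =>
    G.B h ((H.play p.2).K k) p.1 p'.1 ∧ H.B ((G.play p.1).v h) k p.2 p'.2

/-- Tensor (simultaneous play) `G₁ ⊗ G₂` of open games. -/
def tensor {X₁ S₁ Y₁ R₁ X₂ S₂ Y₂ R₂ : Type}
    (G₁ : OpenGame X₁ S₁ Y₁ R₁) (G₂ : OpenGame X₂ S₂ Y₂ R₂) :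
    OpenGame (X₁ × X₂) (S₁ × S₂) (Y₁ × Y₂) (R₁ × R₂) where
  Strat := G₁.Strat × G₂.Strat
  play := fun p => (G₁.play p.1).tensor (G₂.play p.2)
  B := fun h k p p' =>
    G₁.B h.1 (fun y => (k (y, (G₂.play p.2).v h.2)).1) p.1 p'.1 ∧
    G₂.B h.2 (fun y' => (k ((G₁.play p.1).v h.1, y')).2) p.2 p'.2

end OpenGame

/-- A (contravariant lens) morphism of open games `α : G → G'`: lenses
`s(α) : Φ' → Φ` and `t(α) : Ψ' → Ψ` and a map on strategy profiles, such that plays are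
intertwined and best responses are preserved. -/
structure OGMor {X S Y R X' S' Y' R' : Type}
    (G : OpenGame X S Y R) (G' : OpenGame X' S' Y' R') where
  s : Lens X' S' X S
  t : Lens Y' R' Y R
  f : G.Strat → G'.Strat
  comm : ∀ σ, (G.play σ).comp s = t.comp (G'.play (f σ))
  best : ∀ h k σ σ', G.B (s.v h) k σ σ' → G'.B h (t.K k) (f σ) (f σ')

/-- Vertical composition of morphisms of open games. -/
def OGMor.vcomp {X S Y R X' S' Y' R' X'' S'' Y'' R'' : Type}
    {G : OpenGame X S Y R} {G' : OpenGame X' S' Y' R'} {G'' : OpenGame X'' S'' Y'' R''}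
    (β : OGMor G' G'') (α : OGMor G G') : OGMor G G'' where
  s := α.s.comp β.s
  t := α.t.comp β.t
  f := β.f ∘ α.f
  comm := by
    intro σ
    show _ = (α.t.comp β.t).comp (G''.play (β.f (α.f σ)))
    rw [← Lens.comp_assoc, α.comm, Lens.comp_assoc, β.comm, ← Lens.comp_assoc]
  best := by
    intro h k σ σ' hB
    exact β.best h (α.t.K k) _ _ (α.best (β.s.v h) k σ σ' hB)

/-- Horizontal composition of morphisms of open games: given morphisms `α : G → G'` and
`β : H → H'` with `t(α) = s(β)`, the data `s(β⊙α) = s(α)`, `t(β⊙α) = t(β)`,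
`Σ(β⊙α) = Σ(α) × Σ(β)` satisfies both morphism axioms, giving a morphism of open games
`β⊙α : H⊙G → H'⊙G'`. -/
theorem horizontal_composition_of_morphisms_exists
    {X S Y R Z Q X' S' Y' R' Z' Q' : Type}
    (G : OpenGame X S Y R) (H : OpenGame Y R Z Q)
    (G' : OpenGame X' S' Y' R') (H' : OpenGame Y' R' Z' Q')
    (α : OGMor G G') (β : OGMor H H') (hts : α.t = β.s) :
    ∃ γ : OGMor (G.seq H) (G'.seq H'),
      γ.s = α.s ∧ γ.t = β.t ∧ γ.f = fun p => (α.f p.1, β.f p.2) := by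
  refine ⟨{
    s := α.s
    t := β.t
    f := fun p => (α.f p.1, β.f p.2)
    comm := by
      intro p
      show ((H.play p.2).comp (G.play p.1)).comp α.s = _
      rw [Lens.comp_assoc, α.comm, ← Lens.comp_assoc, hts, β.comm, Lens.comp_assoc]; rfl
    best := by
      rintro h k ⟨σ, τ⟩ ⟨σ', τ'⟩ ⟨h1, h2⟩
      constructor
      · have := α.best h ((H.play τ).K k) σ σ' h1
        have keq : α.t.K ((H.play τ).K k) = (H'.play (β.f τ)).K (β.t.K k) := by
          rw [← Lens.K_comp, ← Lens.K_comp, hts, β.comm]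
        rwa [keq] at this
      · have hv : β.s.v ((G'.play (α.f σ)).v h) = (G.play σ).v (α.s.v h) := by
          have := congrArg Lens.v (α.comm σ)
          have := congrFun this h
          simp only [Lens.comp] at this
          rw [← hts, ← this]
        have := β.best ((G'.play (α.f σ)).v h) k τ τ' (by rwa [hv])
        exact this
  }, rfl, rfl, rfl⟩
end

section
/- Horizontal composition of morphisms of open games satisfies the interchange law: let Φ →G Ψ →H Θ, Φ' →G' Ψ' →H' Θ' and Φ'' →G'' Ψ'' →H'' Θ'' be open games, and let G →α G' →α' G'' and H →β H' →β' H'' be morphisms of open games with t(α) = s(β) and t(α') = s(β'). Then (β'⊙α') ∘ (β⊙α) = (β'∘β) ⊙ (α'∘α) as morphisms H⊙G → H''⊙G''. -/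
/-- Horizontal composition `β ⊙ α` of morphisms of open games, defined when
`t(α) = s(β)`. -/
def OGMor.hcomp {X S Y R Z Q X' S' Y' R' Z' Q' : Type}
    {G : OpenGame X S Y R} {H : OpenGame Y R Z Q}
    {G' : OpenGame X' S' Y' R'} {H' : OpenGame Y' R' Z' Q'}
    (α : OGMor G G') (β : OGMor H H') (hts : α.t = β.s) :
    OGMor (G.seq H) (G'.seq H') where
  s := α.s
  t := β.t
  f := fun p => (α.f p.1, β.f p.2)
  comm := by
    intro p
    show ((H.play p.2).comp (G.play p.1)).comp α.s
        = β.t.comp ((H'.play (β.f p.2)).comp (G'.play (α.f p.1)))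
    rw [Lens.comp_assoc, α.comm, ← Lens.comp_assoc, hts, β.comm, Lens.comp_assoc]
  best := by
    intro h k p p' hB
    obtain ⟨h1, h2⟩ := hB
    constructor
    · have hb := α.best h ((H.play p.2).K k) p.1 p'.1 h1
      rw [← Lens.K_comp, hts, β.comm, Lens.K_comp] at hb
      exact hb
    · have hv := congrFun (congrArg Lens.v (α.comm p.1)) h
      rw [hts] at hv
      show H'.B ((G'.play (α.f p.1)).v h) (β.t.K k) (β.f p.2) (β.f p'.2)
      refine β.best _ k p.2 p'.2 ?_
      show H.B (Lens.v (β.s.comp (G'.play (α.f p.1))) h) k p.2 p'.2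
      rw [← hv]
      exact h2

/-- Interchange law: horizontal and vertical composition of morphisms of open games commute:
`(β'⊙α') ∘ (β⊙α) = (β'∘β) ⊙ (α'∘α)` as morphisms `H⊙G → H''⊙G''`. -/
theorem interchange_law
    {X S Y R Z Q X' S' Y' R' Z' Q' X'' S'' Y'' R'' Z'' Q'' : Type}
    {G : OpenGame X S Y R} {H : OpenGame Y R Z Q}
    {G' : OpenGame X' S' Y' R'} {H' : OpenGame Y' R' Z' Q'}
    {G'' : OpenGame X'' S'' Y'' R''} {H'' : OpenGame Y'' R'' Z'' Q''}
    (α : OGMor G G') (α' : OGMor G' G'') (β : OGMor H H') (β' : OGMor H' H'')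
    (hts : α.t = β.s) (hts' : α'.t = β'.s) :
    (α'.hcomp β' hts').vcomp (α.hcomp β hts) =
      (α'.vcomp α).hcomp (β'.vcomp β)
        (by simp only [OGMor.vcomp, hts, hts']) := by
  rfl
end

section
/- The functor s : Game_v → Lensᵒᵖ (sending an open game G : Φ ⇸ Ψ to Φ and a morphism α to s(α)) is a Grothendieck opfibration; the functor t : Game_v → Lensᵒᵖ (sending G to Ψ and α to t(α)) is a Grothendieck fibration; and the functor Σ : Game_v → Set (sending G to Σ(G) and α to Σ(α)) is a Grothendieck fibration. In particular, for s, the opcartesian lift of a lens λ : Φ → Ψ at an open game G with s(G) = Ψ is the morphism (λ, id, id) : G → λ_!(G), where λ_!(G) : Φ ⇸ t(G) has Σ(λ_!(G)) = Σ(G), λ_!(G)(σ) = G(σ) ∘ λ, and B_{λ_!(G)}(h,k) = B_G(v_λ(h), k). -/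
/-- Pushforward of an open game `G` with `s(G) = Ψ` along a lens `λ : Φ → Ψ`:
the open game `λ_!(G)` with `Σ(λ_!(G)) = Σ(G)`, `λ_!(G)(σ) = G(σ) ∘ λ` and
`B_{λ_!(G)}(h,k) = B_G(v_λ(h), k)`. -/
def OpenGame.push {X S Y R Z Q : Type} (l : Lens X S Y R) (G : OpenGame Y R Z Q) :
    OpenGame X S Z Q where
  Strat := G.Strat
  play := fun σ => (G.play σ).comp l
  B := fun h k σ σ' => G.B (l.v h) k σ σ'

/-- The opcartesian lift of a lens `λ : Φ → Ψ` at a game `G` with `s(G) = Ψ`: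
the morphism `(λ, id, id) : G → λ_!(G)`. -/
def OpenGame.pushLift {X S Y R Z Q : Type} (l : Lens X S Y R) (G : OpenGame Y R Z Q) :
    OGMor G (G.push l) where
  s := l
  t := Lens.id Z Q
  f := fun σ => σ
  comm := fun _ => rfl
  best := fun _ _ _ _ hB => hB

/-- Pullback of an open game `G'` with `t(G') = Ψ'` along a lens `λ : Ψ' → Ψ`:
the open game `λ^*(G')` with `Σ(λ^*(G')) = Σ(G')`, `λ^*(G')(σ) = λ ∘ G'(σ)` and
`B_{λ^*(G')}(h,k) = B_{G'}(h, K(λ)(k))`. -/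
def OpenGame.pull {X' S' Y' R' Y R : Type} (l : Lens Y' R' Y R) (G' : OpenGame X' S' Y' R') :
    OpenGame X' S' Y R where
  Strat := G'.Strat
  play := fun σ => l.comp (G'.play σ)
  B := fun h k σ σ' => G'.B h (l.K k) σ σ'

/-- The cartesian lift of a lens `λ : Ψ' → Ψ` at a game `G'` with `t(G') = Ψ'`:
the morphism `(id, λ, id) : λ^*(G') → G'`. -/
def OpenGame.pullLift {X' S' Y' R' Y R : Type} (l : Lens Y' R' Y R)
    (G' : OpenGame X' S' Y' R') : OGMor (G'.pull l) G' where
  s := Lens.id X' S'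
  t := l
  f := fun σ => σ
  comm := fun _ => rfl
  best := fun _ _ _ _ hB => hB

/-- Pullback of an open game `G'` along a function `φ : T → Σ(G')` on strategy profiles. -/
def OpenGame.pullStrat {X S Y R : Type} {T : Type} (G' : OpenGame X S Y R)
    (φ : T → G'.Strat) : OpenGame X S Y R where
  Strat := T
  play := fun σ => G'.play (φ σ)
  B := fun h k σ σ' => G'.B h k (φ σ) (φ σ')

/-- The cartesian lift of a function `φ : T → Σ(G')` at `G'`:
the morphism `(id, id, φ) : φ^*(G') → G'`. -/
def OpenGame.pullStratLift {X S Y R : Type} {T : Type} (G' : OpenGame X S Y R)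
    (φ : T → G'.Strat) : OGMor (G'.pullStrat φ) G' where
  s := Lens.id X S
  t := Lens.id Y R
  f := φ
  comm := fun _ => rfl
  best := fun _ _ _ _ hB => hB

theorem OGMor.ext' {X S Y R X' S' Y' R' : Type}
    {G : OpenGame X S Y R} {G' : OpenGame X' S' Y' R'} {α β : OGMor G G'}
    (hs : α.s = β.s) (ht : α.t = β.t) (hf : α.f = β.f) : α = β := by
  cases α; cases β; dsimp at hs ht hf; subst hs; subst ht; subst hf; rfl

/-- `s : Game_v → Lensᵒᵖ` is an opfibration, `t : Game_v → Lensᵒᵖ` is a fibration, and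
`Σ : Game_v → Set` is a fibration, with the (op)cartesian lifts given explicitly by
`pushLift`, `pullLift` and `pullStratLift`. -/
theorem source_target_strategy_fibrations :
    -- s is an opfibration: `pushLift l G : G → l_!(G)` is opcartesian
    (∀ (X S Y R Z Q W T Z' Q' : Type) (l : Lens X S Y R) (G : OpenGame Y R Z Q)
      (H : OpenGame W T Z' Q') (γ : OGMor G H) (μ : Lens W T X S),
      γ.s = l.comp μ →
        ∃! δ : OGMor (G.push l) H, δ.s = μ ∧ δ.vcomp (G.pushLift l) = γ) ∧
    -- t is a fibration: `pullLift l G' : l^*(G') → G'` is cartesian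
    (∀ (X' S' Y' R' Y R W T Z Q : Type) (l : Lens Y' R' Y R) (G' : OpenGame X' S' Y' R')
      (H : OpenGame W T Z Q) (γ : OGMor H G') (μ : Lens Y R Z Q),
      γ.t = μ.comp l →
        ∃! δ : OGMor H (G'.pull l), δ.t = μ ∧ (G'.pullLift l).vcomp δ = γ) ∧
    -- Σ is a fibration: `pullStratLift G' φ : φ^*(G') → G'` is cartesian
    (∀ (X S Y R W T W' T' : Type) (T0 : Type) (G' : OpenGame X S Y R)
      (φ : T0 → G'.Strat) (H : OpenGame W T W' T') (γ : OGMor H G')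
      (g : H.Strat → T0),
      γ.f = φ ∘ g →
        ∃! δ : OGMor H (G'.pullStrat φ), δ.f = g ∧ (G'.pullStratLift φ).vcomp δ = γ) := by
  refine ⟨?_, ?_, ?_⟩
  · intro X S Y R Z Q W T Z' Q' l G H γ μ hγ
    refine ⟨⟨μ, γ.t, γ.f, ?_, ?_⟩, ⟨rfl, ?_⟩, ?_⟩
    · intro σ
      show ((G.play σ).comp l).comp μ = _
      rw [Lens.comp_assoc, ← hγ]
      exact γ.comm σ
    · intro h k σ σ' hB
      exact γ.best h k σ σ' (by simpa [hγ, Lens.comp, OpenGame.push] using hB)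
    · exact OGMor.ext' hγ.symm rfl rfl
    · rintro δ ⟨h1, h2⟩
      refine OGMor.ext' h1 ?_ ?_
      · have := congrArg OGMor.t h2
        simpa [OGMor.vcomp, OpenGame.pushLift, Lens.comp, Lens.id] using this
      · have := congrArg OGMor.f h2
        exact this
  · intro X' S' Y' R' Y R W T Z Q l G' H γ μ hγ
    refine ⟨⟨γ.s, μ, γ.f, ?_, ?_⟩, ⟨rfl, ?_⟩, ?_⟩
    · intro σ
      show _ = μ.comp (l.comp (G'.play (γ.f σ)))
      rw [← Lens.comp_assoc, ← hγ]
      exact γ.comm σ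
    · intro h k σ σ' hB
      have := γ.best h k σ σ' hB
      simpa [hγ, Lens.K_comp, OpenGame.pull] using this
    · exact OGMor.ext' rfl hγ.symm rfl
    · rintro δ ⟨h1, h2⟩
      refine OGMor.ext' ?_ h1 ?_
      · have := congrArg OGMor.s h2
        simpa [OGMor.vcomp, OpenGame.pullLift, Lens.comp, Lens.id] using this
      · have := congrArg OGMor.f h2
        exact this
  · intro X S Y R W T W' T' T0 G' φ H γ g hγ
    refine ⟨⟨γ.s, γ.t, g, ?_, ?_⟩, ⟨rfl, ?_⟩, ?_⟩
    · intro σ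
      show (H.play σ).comp γ.s = γ.t.comp (G'.play (φ (g σ)))
      have := γ.comm σ
      rwa [hγ] at this
    · intro h k σ σ' hB
      have := γ.best h k σ σ' hB
      simpa [hγ, OpenGame.pullStrat] using this
    · exact OGMor.ext' rfl rfl hγ.symm
    · rintro δ ⟨h1, h2⟩
      refine OGMor.ext' ?_ ?_ h1
      · have := congrArg OGMor.s h2
        simpa [OGMor.vcomp, OpenGame.pullStratLift, Lens.comp, Lens.id] using this
      · have := congrArg OGMor.t h2
        simpa [OGMor.vcomp, OpenGame.pullStratLift, Lens.comp, Lens.id] using this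
end

section
/- Let Ξ →κ Φ →λ Ψ →μ Θ and Ξ' →κ' Φ' →λ' Ψ' →μ' Θ' be lenses. Then, as functions C(Ξ⊗Ξ', Θ⊗Θ') → C(Φ,Ψ) and C(Ξ⊗Ξ', Θ⊗Θ') → C(Φ',Ψ') respectively, C(κ,μ) ∘ L(μ'∘λ'∘κ') = L(λ') ∘ C(κ⊗κ', μ⊗μ') and C(κ',μ') ∘ R(μ∘λ∘κ) = R(λ) ∘ C(κ⊗κ', μ⊗μ'), where C(κ,μ) : C(Ξ,Θ) → C(Φ,Ψ) is the map (h,k) ↦ (v_κ(h), K(μ)(k)). -/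
/-- A context for the pair of disets `(Φ, Ψ) = ((X,S), (Y,R))`:
`C(Φ,Ψ) = V(Φ) × K(Ψ)`. -/
def Context (X S Y R : Type) : Type := X × (Y → R)

/-- `L(λ') : C(Φ⊗Φ', Ψ⊗Ψ') → C(Φ,Ψ)` for a lens `λ' : Φ' → Ψ'`. -/
def Lmap {X S Y R X' S' Y' R' : Type} (l' : Lens X' S' Y' R')
    (c : Context (X × X') (S × S') (Y × Y') (R × R')) : Context X S Y R :=
  (c.1.1, fun y => (c.2 (y, l'.v c.1.2)).1)

/-- `R(λ) : C(Φ⊗Φ', Ψ⊗Ψ') → C(Φ',Ψ')` for a lens `λ : Φ → Ψ`. -/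
def Rmap {X S Y R X' S' Y' R' : Type} (l : Lens X S Y R)
    (c : Context (X × X') (S × S') (Y × Y') (R × R')) : Context X' S' Y' R' :=
  (c.1.2, fun y' => (c.2 (l.v c.1.1, y')).2)

/-- The action of the context functor `C : Lens × Lensᵒᵖ → Set` on a pair of lenses
`κ : Ξ → Φ`, `μ : Ψ → Θ`: the map `C(Ξ,Θ) → C(Φ,Ψ)`, `(h,k) ↦ (v_κ(h), K(μ)(k))`. -/
def Cmap {XΞ SΞ X S Y R XΘ SΘ : Type} (κ : Lens XΞ SΞ X S) (μ : Lens Y R XΘ SΘ)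
    (c : Context XΞ SΞ XΘ SΘ) : Context X S Y R :=
  (κ.v c.1, μ.K c.2)

/-- The projection lemma: for lenses `Ξ →κ Φ →λ Ψ →μ Θ` and `Ξ' →κ' Φ' →λ' Ψ' →μ' Θ'`,
`C(κ,μ) ∘ L(μ'∘λ'∘κ') = L(λ') ∘ C(κ⊗κ', μ⊗μ')` and
`C(κ',μ') ∘ R(μ∘λ∘κ) = R(λ) ∘ C(κ⊗κ', μ⊗μ')`
as functions `C(Ξ⊗Ξ', Θ⊗Θ') → C(Φ,Ψ)` resp. `C(Ξ⊗Ξ', Θ⊗Θ') → C(Φ',Ψ')`. -/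
theorem projection_lemma
    {XΞ SΞ X S Y R XΘ SΘ XΞ' SΞ' X' S' Y' R' XΘ' SΘ' : Type}
    (κ : Lens XΞ SΞ X S) (lam : Lens X S Y R) (μ : Lens Y R XΘ SΘ)
    (κ' : Lens XΞ' SΞ' X' S') (lam' : Lens X' S' Y' R') (μ' : Lens Y' R' XΘ' SΘ') :
    (∀ c : Context (XΞ × XΞ') (SΞ × SΞ') (XΘ × XΘ') (SΘ × SΘ'),
      Cmap κ μ (Lmap (μ'.comp (lam'.comp κ')) c) =
        Lmap lam' (Cmap (κ.tensor κ') (μ.tensor μ') c)) ∧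
    (∀ c : Context (XΞ × XΞ') (SΞ × SΞ') (XΘ × XΘ') (SΘ × SΘ'),
      Cmap κ' μ' (Rmap (μ.comp (lam.comp κ)) c) =
        Rmap lam (Cmap (κ.tensor κ') (μ.tensor μ') c)) := by
  exact ⟨fun c => rfl, fun c => rfl⟩
end

section
/- Let α₁ : G₁ → G₁' and α₂ : G₂ → G₂' be morphisms of open games. Then the data s(α₁⊗α₂) = s(α₁) ⊗ s(α₂), t(α₁⊗α₂) = t(α₁) ⊗ t(α₂), Σ(α₁⊗α₂) = Σ(α₁) × Σ(α₂) satisfies both morphism axioms, giving a morphism of open games α₁⊗α₂ : G₁⊗G₂ → G₁'⊗G₂'. -/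
/-- Tensor of morphisms of open games: given morphisms `α₁ : G₁ → G₁'` and `α₂ : G₂ → G₂'`,
the data `s(α₁⊗α₂) = s(α₁) ⊗ s(α₂)`, `t(α₁⊗α₂) = t(α₁) ⊗ t(α₂)`,
`Σ(α₁⊗α₂) = Σ(α₁) × Σ(α₂)` satisfies both morphism axioms, giving a morphism of open games
`α₁⊗α₂ : G₁⊗G₂ → G₁'⊗G₂'`. -/
theorem tensor_of_morphisms_exists
    {X₁ S₁ Y₁ R₁ X₂ S₂ Y₂ R₂ X₁' S₁' Y₁' R₁' X₂' S₂' Y₂' R₂' : Type}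
    (G₁ : OpenGame X₁ S₁ Y₁ R₁) (G₂ : OpenGame X₂ S₂ Y₂ R₂)
    (G₁' : OpenGame X₁' S₁' Y₁' R₁') (G₂' : OpenGame X₂' S₂' Y₂' R₂')
    (α₁ : OGMor G₁ G₁') (α₂ : OGMor G₂ G₂') :
    ∃ γ : OGMor (G₁.tensor G₂) (G₁'.tensor G₂'),
      γ.s = α₁.s.tensor α₂.s ∧ γ.t = α₁.t.tensor α₂.t ∧
        γ.f = fun p => (α₁.f p.1, α₂.f p.2) := by
  have hv₁ : ∀ σ x, (G₁.play σ).v (α₁.s.v x) = α₁.t.v ((G₁'.play (α₁.f σ)).v x) := by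
    intro σ x
    exact congrArg (fun l => Lens.v l x) (α₁.comm σ)
  have hv₂ : ∀ σ x, (G₂.play σ).v (α₂.s.v x) = α₂.t.v ((G₂'.play (α₂.f σ)).v x) := by
    intro σ x
    exact congrArg (fun l => Lens.v l x) (α₂.comm σ)
  refine ⟨⟨α₁.s.tensor α₂.s, α₁.t.tensor α₂.t, fun p => (α₁.f p.1, α₂.f p.2), ?_, ?_⟩,
    rfl, rfl, rfl⟩
  · intro σ
    have h₁ := α₁.comm σ.1
    have h₂ := α₂.comm σ.2
    show ((G₁.play σ.1).tensor (G₂.play σ.2)).comp (α₁.s.tensor α₂.s)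
      = (α₁.t.tensor α₂.t).comp ((G₁'.play (α₁.f σ.1)).tensor (G₂'.play (α₂.f σ.2)))
    have key : ∀ {A B C D A' B' C' D' E F E' F' : Type}
        (a : Lens A B C D) (a' : Lens A' B' C' D')
        (b : Lens C D E F) (b' : Lens C' D' E' F'),
        (b.tensor b').comp (a.tensor a') = (b.comp a).tensor (b'.comp a') := fun _ _ _ _ => rfl
    rw [key, key, h₁, h₂]
  · rintro h k ⟨σ₁, σ₂⟩ ⟨σ₁', σ₂'⟩ ⟨hB₁, hB₂⟩
    constructor
    · have := α₁.best h.1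
        (fun y => (k (y, α₂.t.v ((G₂'.play (α₂.f σ₂)).v h.2))).1) σ₁ σ₁' ?_
      · exact this
      · simpa [Lens.tensor, ← hv₂ σ₂ h.2] using hB₁
    · have := α₂.best h.2
        (fun y' => (k (α₁.t.v ((G₁'.play (α₁.f σ₁)).v h.1), y')).2) σ₂ σ₂' ?_
      · exact this
      · simpa [Lens.tensor, ← hv₁ σ₁ h.1] using hB₂
end

section
/- Let G₁ : Φ₁ ⇸ Ψ₁, G₂ : Φ₂ ⇸ Ψ₂, H₁ : Ψ₁ ⇸ Θ₁, H₂ : Ψ₂ ⇸ Θ₂ be open games. Then the open games (H₁⊗H₂)⊙(G₁⊗G₂) and (H₁⊙G₁)⊗(H₂⊙G₂) (both of type Φ₁⊗Φ₂ ⇸ Θ₁⊗Θ₂) are isomorphic via the middle-four interchange bijection ((σ₁,σ₂),(τ₁,τ₂)) ↦ ((σ₁,τ₁),(σ₂,τ₂)) of strategy profiles: (a) the corresponding lenses agree, i.e. (H₁(τ₁)⊗H₂(τ₂)) ∘ (G₁(σ₁)⊗G₂(σ₂)) = (H₁(τ₁)∘G₁(σ₁)) ⊗ (H₂(τ₂)∘G₂(σ₂));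 and (b) for every context c, (((σ₁,σ₂),(τ₁,τ₂)), ((σ₁',σ₂'),(τ₁',τ₂'))) ∈ B_{(H₁⊗H₂)⊙(G₁⊗G₂)}(c) if and only if (((σ₁,τ₁),(σ₂,τ₂)), ((σ₁',τ₁'),(σ₂',τ₂'))) ∈ B_{(H₁⊙G₁)⊗(H₂⊙G₂)}(c). -/
/-- Middle-four interchange for open games: `(H₁⊗H₂)⊙(G₁⊗G₂)` and `(H₁⊙G₁)⊗(H₂⊙G₂)`
are isomorphic via the bijection `((σ₁,σ₂),(τ₁,τ₂)) ↦ ((σ₁,τ₁),(σ₂,τ₂))` of strategy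
profiles: the corresponding lenses agree, and best responses correspond in every context. -/
theorem middle_four_interchange
    {X₁ S₁ Y₁ R₁ Z₁ Q₁ X₂ S₂ Y₂ R₂ Z₂ Q₂ : Type}
    (G₁ : OpenGame X₁ S₁ Y₁ R₁) (G₂ : OpenGame X₂ S₂ Y₂ R₂)
    (H₁ : OpenGame Y₁ R₁ Z₁ Q₁) (H₂ : OpenGame Y₂ R₂ Z₂ Q₂) :
    -- (a) the lenses agree
    (∀ (σ₁ : G₁.Strat) (σ₂ : G₂.Strat) (τ₁ : H₁.Strat) (τ₂ : H₂.Strat),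
      ((H₁.play τ₁).tensor (H₂.play τ₂)).comp ((G₁.play σ₁).tensor (G₂.play σ₂)) =
        ((H₁.play τ₁).comp (G₁.play σ₁)).tensor ((H₂.play τ₂).comp (G₂.play σ₂))) ∧
    -- (b) best responses correspond in every context
    (∀ (h : X₁ × X₂) (k : Z₁ × Z₂ → Q₁ × Q₂)
      (σ₁ σ₁' : G₁.Strat) (σ₂ σ₂' : G₂.Strat) (τ₁ τ₁' : H₁.Strat) (τ₂ τ₂' : H₂.Strat),
      ((G₁.tensor G₂).seq (H₁.tensor H₂)).B h k ((σ₁, σ₂), (τ₁, τ₂)) ((σ₁', σ₂'), (τ₁', τ₂'))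
        ↔
      ((G₁.seq H₁).tensor (G₂.seq H₂)).B h k ((σ₁, τ₁), (σ₂, τ₂)) ((σ₁', τ₁'), (σ₂', τ₂'))) := by
  refine ⟨fun _ _ _ _ => rfl, fun h k σ₁ σ₁' σ₂ σ₂' τ₁ τ₁' τ₂ τ₂' => ?_⟩
  simp only [OpenGame.seq, OpenGame.tensor, Lens.K, Lens.comp, Lens.tensor]
  tauto
end

section
/- For every open game G : Φ ⇸ Ψ, there is a bijection between the set of pairs (σ,k) where k ∈ K(Ψ) and σ is a state of G over k, and the set of morphisms of open games u(I) → G. The morphism corresponding to (σ,k) has t-component the lens Ψ → I corresponding to k, s-component the lens Φ → I corresponding to K(G(σ))(k), and Σ-component * ↦ σ. This bijection is natural in G, so the states functor St is naturally isomorphic to Hom_{Game_v}(u(I), -). -/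
/-- The identity open game `u(I)` on the monoidal unit diset `I = ({*},{*})`. -/
def unitGame : OpenGame PUnit PUnit PUnit PUnit where
  Strat := PUnit
  play := fun _ => Lens.id PUnit PUnit
  B := fun _ _ _ _ => True

/-- The set of states of an open game: pairs `(σ, k)` with `σ` a state over `k`. -/
def OpenGame.States {X S Y R : Type} (G : OpenGame X S Y R) : Type :=
  { p : G.Strat × (Y → R) // G.IsState p.1 p.2 }

/-- The functorial action of `St` on a morphism of open games. -/
def OpenGame.States.map {X S Y R X' S' Y' R' : Type}
    {G : OpenGame X S Y R} {G' : OpenGame X' S' Y' R'} (α : OGMor G G')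
    (p : G.States) : G'.States :=
  ⟨(α.f p.1.1, α.t.K p.1.2), fun h => α.best h p.1.2 p.1.1 p.1.1 (p.2 (α.s.v h))⟩

/-- The morphism `u(I) → G` corresponding to a state `(σ, k)` of `G`:
its `t`-component is the lens `Ψ → I` corresponding to `k`, its `s`-component is the lens
`Φ → I` corresponding to `K(G(σ))(k)`, and its `Σ`-component is `* ↦ σ`. -/
def stateToMor {X S Y R : Type} (G : OpenGame X S Y R) (p : G.States) :
    OGMor unitGame G where
  s := ⟨fun _ => PUnit.unit, fun x _ => (G.play p.1.1).K p.1.2 x⟩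
  t := ⟨fun _ => PUnit.unit, fun y _ => p.1.2 y⟩
  f := fun _ => p.1.1
  comm := fun _ => rfl
  best := fun h _ _ _ _ => p.2 h

theorem lens_ext {X S Y R : Type} {a b : Lens X S Y R} (hv : a.v = b.v) (hu : a.u = b.u) :
    a = b := by cases a; cases b; cases hv; cases hu; rfl

theorem ogmor_ext {X S Y R X' S' Y' R' : Type} {G : OpenGame X S Y R}
    {G' : OpenGame X' S' Y' R'} {a b : OGMor G G'} (hs : a.s = b.s) (ht : a.t = b.t)
    (hf : a.f = b.f) : a = b := by
  cases a; cases b; cases hs; cases ht; cases hf; rfl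

/-- For every open game `G`, the map sending a state `(σ, k)` of `G` to the morphism
`u(I) → G` above is a bijection `St(G) ≅ Hom_{Game_v}(u(I), G)`, natural in `G`:
the states functor is naturally isomorphic to `Hom_{Game_v}(u(I), -)`. -/
theorem states_representable :
    (∀ (X S Y R : Type) (G : OpenGame X S Y R), Function.Bijective (stateToMor G)) ∧
    (∀ (X S Y R X' S' Y' R' : Type) (G : OpenGame X S Y R) (G' : OpenGame X' S' Y' R')
      (α : OGMor G G') (p : G.States),
      α.vcomp (stateToMor G p) = stateToMor G' (OpenGame.States.map α p)) := by
  constructor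
  · intro X S Y R G
    constructor
    · intro p q h
      have hf : p.1.1 = q.1.1 := congrFun (congrArg OGMor.f h) PUnit.unit
      have ht : p.1.2 = q.1.2 := by
        funext y
        exact congrFun (congrFun (congrArg (fun m => OGMor.t m |>.u) h) y) PUnit.unit
      exact Subtype.ext (Prod.ext hf ht)
    · intro m
      set σ := m.f PUnit.unit with hσ
      set k : Y → R := fun y => m.t.u y PUnit.unit with hk
      have hstate : G.IsState σ k := by
        intro h
        have hb := m.best h (fun _ => PUnit.unit) PUnit.unit PUnit.unit trivial
        have : m.t.K (fun _ => PUnit.unit) = k := by funext y; rfl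
        rwa [this] at hb
      refine ⟨⟨(σ, k), hstate⟩, ogmor_ext ?_ ?_ ?_⟩
      · have hc := m.comm PUnit.unit
        refine lens_ext ?_ ?_
        · funext x; rfl
        · funext x r
          cases r
          have := congrFun (congrFun (congrArg Lens.u hc) x) PUnit.unit
          exact this.symm
      · refine lens_ext ?_ ?_
        · funext y; rfl
        · funext y r; cases r; rfl
      · funext u; cases u; rfl
  · intro X S Y R X' S' Y' R' G G' α p
    refine ogmor_ext ?_ ?_ ?_
    · refine lens_ext rfl ?_
      funext x r
      cases r
      have hc := α.comm p.1.1
      show α.s.u x ((G.play p.1.1).K p.1.2 (α.s.v x)) = _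
      show α.s.u x ((G.play p.1.1).u (α.s.v x) (p.1.2 ((G.play p.1.1).v (α.s.v x)))) = _
      have h2 := congrFun (congrFun (congrArg Lens.u hc) x)
      calc α.s.u x ((G.play p.1.1).u (α.s.v x) (p.1.2 ((G.play p.1.1).v (α.s.v x))))
          = ((G.play p.1.1).comp α.s).u x (p.1.2 ((G.play p.1.1).v (α.s.v x))) := rfl
        _ = (G'.play (α.f p.1.1)).u x (α.t.u ((G'.play (α.f p.1.1)).v x) (p.1.2 ((G.play p.1.1).v (α.s.v x)))) := by
            rw [hc]; rfl
        _ = _ := by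
            have hv := congrFun (congrArg Lens.v hc) x
            have : (G.play p.1.1).v (α.s.v x) = α.t.v ((G'.play (α.f p.1.1)).v x) := hv
            rw [this]; rfl
    · refine lens_ext rfl ?_
      funext y r; cases r; rfl
    · rfl
end

section
/- Backward induction for states: let G : Φ ⇸ Ψ and H : Ψ ⇸ Θ be open games, let τ be a state of H over k ∈ K(Θ), and let σ be a state of G over K(H(τ))(k) ∈ K(Ψ). Then (σ,τ) is a state of H⊙G over k. -/
/-- Backward induction for states: if `τ` is a state of `H` over `k` and `σ` is a state of
`G` over `K(H(τ))(k)`, then `(σ, τ)` is a state of `H⊙G` over `k`. -/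
theorem backward_induction
    {X S Y R Z Q : Type}
    (G : OpenGame X S Y R) (H : OpenGame Y R Z Q)
    (τ : H.Strat) (k : Z → Q) (σ : G.Strat)
    (hτ : H.IsState τ k) (hσ : G.IsState σ ((H.play τ).K k)) :
    (G.seq H).IsState (σ, τ) k := by
  intro h
  exact ⟨hσ h, hτ _⟩
end

section
/- Let G₁ : Φ₁ ⇸ Ψ₁ and G₂ : Φ₂ ⇸ Ψ₂ be open games, let σ₁ be a state of G₁ over k₁ ∈ K(Ψ₁) and σ₂ a state of G₂ over k₂ ∈ K(Ψ₂). Then (σ₁,σ₂) is a state of G₁⊗G₂ over the continuation k₁⊗k₂ ∈ K(Ψ₁⊗Ψ₂) given by (k₁⊗k₂)(y₁,y₂) = (k₁(y₁), k₂(y₂)). -/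
/-- States are closed under tensor: if `σ₁` is a state of `G₁` over `k₁` and `σ₂` is a
state of `G₂` over `k₂`, then `(σ₁, σ₂)` is a state of `G₁⊗G₂` over `k₁⊗k₂`, where
`(k₁⊗k₂)(y₁,y₂) = (k₁(y₁), k₂(y₂))`. -/
theorem tensor_of_states
    {X₁ S₁ Y₁ R₁ X₂ S₂ Y₂ R₂ : Type}
    (G₁ : OpenGame X₁ S₁ Y₁ R₁) (G₂ : OpenGame X₂ S₂ Y₂ R₂)
    (σ₁ : G₁.Strat) (k₁ : Y₁ → R₁) (σ₂ : G₂.Strat) (k₂ : Y₂ → R₂)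
    (h₁ : G₁.IsState σ₁ k₁) (h₂ : G₂.IsState σ₂ k₂) :
    (G₁.tensor G₂).IsState (σ₁, σ₂) (fun y => (k₁ y.1, k₂ y.2)) := by
  intro h
  exact ⟨h₁ h.1, h₂ h.2⟩
end

section
/- Let n ≥ 1, let Y₁,…,Y_n be sets, and let k : ∏_{i=1}^n Yᵢ → ℝⁿ. Under the canonical bijection Σ(⊗_{i=1}^n D_{1,Yᵢ}) ≅ ∏_{i=1}^n Yᵢ (and the canonical identifications of the iterated monoidal unit), a strategy profile σ ∈ ∏ᵢ Yᵢ is a state of the iterated tensor ⊗_{i=1}^n D_{1,Yᵢ} : I ⇸ (∏ᵢ Yᵢ, ℝⁿ) over k if and only if σ is a pure Nash equilibrium of the n-player normal form game with payoff function k; that is, iff for every player 1 ≤ j ≤ n and every yⱼ ∈ Yⱼ, (k(σ))ⱼ ≥ (k(yⱼ, σ_{-j}))ⱼ, where (yⱼ, σ_{-j}) is σ with its j-th component replaced by yⱼ. -/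
/-- Relabel an open game along bijections of its boundary sets and of its set of strategy
profiles (canonical identification of open games). -/
def OpenGame.reindex {X S Y R X' S' Y' R' : Type} (G : OpenGame X S Y R)
    (eX : X ≃ X') (eS : S ≃ S') (eY : Y ≃ Y') (eR : R ≃ R')
    {T : Type} (eT : G.Strat ≃ T) : OpenGame X' S' Y' R' where
  Strat := T
  play := fun σ =>
    ⟨fun x' => eY ((G.play (eT.symm σ)).v (eX.symm x')),
     fun x' r' => eS ((G.play (eT.symm σ)).u (eX.symm x') (eR.symm r'))⟩
  B := fun h k σ σ' =>
    G.B (eX.symm h) (fun y => eR.symm (k (eY y))) (eT.symm σ) (eT.symm σ')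

/-- The decision open game `D_{X,Y} : (X,1) ⇸ (Y,ℝ)`. -/
def decision (X Y : Type) : OpenGame X PUnit Y ℝ where
  Strat := X → Y
  play := fun σ => ⟨σ, fun _ _ => PUnit.unit⟩
  B := fun h k _ σ'' => ∀ y : Y, k (σ'' h) ≥ k y

/-- The canonical equivalence `(∏ i : Fin n, Y (castSucc i)) × Y (last n) ≃ ∏ i : Fin (n+1), Y i`
given by `Fin.snoc`. -/
def snocEquiv {n : ℕ} (Y : Fin (n + 1) → Type) :
    ((∀ i : Fin n, Y i.castSucc) × Y (Fin.last n)) ≃ (∀ i : Fin (n + 1), Y i) where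
  toFun p := Fin.snoc p.1 p.2
  invFun f := (fun i => f i.castSucc, f (Fin.last n))
  left_inv p := by
    obtain ⟨a, b⟩ := p
    simp
  right_inv f := by
    funext i
    induction i using Fin.lastCases with
    | last => simp
    | cast j => simp

/-- The iterated tensor `⊗_{i=1}^n D_{1,Y i} : I ⇸ (∏ i, Y i, ℝⁿ)`, built by recursion
using the binary tensor of open games and the canonical identifications of the boundary
disets, together with the canonical bijection of its strategy profiles with `∏ i, Y i`. -/
def nashAux : (n : ℕ) → (Y : Fin n → Type) →
    (G : OpenGame PUnit PUnit (∀ i, Y i) (Fin n → ℝ)) ×' (G.Strat ≃ (∀ i, Y i))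
  | 0, Y =>
    ⟨{ Strat := PUnit
       play := fun _ => ⟨fun _ => (fun i => i.elim0), fun _ _ => PUnit.unit⟩
       B := fun _ _ _ _ => True },
     Equiv.ofUnique PUnit (∀ i : Fin 0, Y i)⟩
  | n + 1, Y =>
    let p := nashAux n (fun i => Y i.castSucc)
    ⟨(p.1.tensor (decision PUnit (Y (Fin.last n)))).reindex
        (Equiv.prodPUnit PUnit) (Equiv.prodPUnit PUnit)
        (snocEquiv Y) (snocEquiv (fun _ => ℝ))
        ((p.2.prodCongr (Equiv.funUnique PUnit (Y (Fin.last n)))).trans (snocEquiv Y)),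
     Equiv.refl _⟩


theorem nashAux_play_v : ∀ (n : ℕ) (Y : Fin n → Type) (τ : (nashAux n Y).1.Strat)
    (h : PUnit), ((nashAux n Y).1.play τ).v h = (nashAux n Y).2 τ
  | 0, Y, τ, h => funext fun i => i.elim0
  | n + 1, Y, τ, h => by
    show Fin.snoc
      (((nashAux n fun i => Y i.castSucc).1.play
        ((nashAux n fun i => Y i.castSucc).2.symm (fun i => τ i.castSucc))).v PUnit.unit)
      (τ (Fin.last n)) = τ
    rw [nashAux_play_v, Equiv.apply_symm_apply]
    funext i
    induction i using Fin.lastCases with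
    | last => simp
    | cast j => simp

theorem nash_key : ∀ (n : ℕ) (Y : Fin n → Type)
    (k : (∀ i, Y i) → (Fin n → ℝ)) (σ : ∀ i, Y i),
    (nashAux n Y).1.IsState ((nashAux n Y).2.symm σ) k ↔
      ∀ (j : Fin n) (y : Y j), k σ j ≥ k (Function.update σ j y) j
  | 0, Y, k, σ => by
    constructor
    · intro _ j
      exact j.elim0
    · intro _ h
      trivial
  | n + 1, Y, k, σ => by
    simp only [OpenGame.IsState, nashAux, OpenGame.reindex, OpenGame.tensor, decision]
    simp only [Equiv.symm_trans_apply, Equiv.prodCongr_symm, Equiv.prodCongr_apply,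
      Equiv.refl_symm, Equiv.refl_apply, snocEquiv, Equiv.coe_fn_mk, Equiv.coe_fn_symm_mk,
      nashAux_play_v, Equiv.apply_symm_apply, Prod.map_apply]
    simp only [Equiv.funUnique_symm_apply, Equiv.prodPUnit, Equiv.coe_fn_symm_mk,
      Function.const_apply, uniqueElim_const]
    have sσ : (Fin.snoc (fun i => σ i.castSucc) (σ (Fin.last n)) : ∀ i, Y i) = σ := by
      funext i
      induction i using Fin.lastCases with
      | last => simp
      | cast j => simp
    have key := nash_key n (fun i => Y i.castSucc)
      (fun a i => k (Fin.snoc a (σ (Fin.last n))) i.castSucc) (fun i => σ i.castSucc)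
    constructor
    · intro H j y
      obtain ⟨H1, H2⟩ := H PUnit.unit
      induction j using Fin.lastCases with
      | last =>
        have h2 := H2 y
        change k (Fin.snoc (fun i => σ i.castSucc) (σ (Fin.last n))) (Fin.last n) ≥ k (Fin.snoc (fun i => σ i.castSucc) y) (Fin.last n) at h2
        rw [sσ] at h2
        rwa [← sσ, Fin.update_snoc_last, sσ]
      | cast j =>
        have h1 := key.mp (fun _ => H1) j y
        rwa [sσ, Fin.snoc_update, sσ] at h1
    · intro H h
      constructor
      · refine key.mpr (fun j y => ?_) PUnit.unit
        have := H j.castSucc y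
        rwa [← sσ, ← Fin.snoc_update] at this
        
      · intro y
        change k (Fin.snoc (fun i => σ i.castSucc) (σ (Fin.last n))) (Fin.last n) ≥ k (Fin.snoc (fun i => σ i.castSucc) y) (Fin.last n)
        rw [sσ]
        have e : Function.update σ (Fin.last n) y
            = (Fin.snoc (fun i => σ i.castSucc) y : ∀ i, Y i) := by
          conv_lhs => rw [← sσ]
          rw [Fin.update_snoc_last]
        rw [← e]
        exact H (Fin.last n) y

/-- Let `n ≥ 1`, let `Y₁,…,Y_n` be sets and `k : ∏ i, Y i → ℝⁿ`. Under the canonical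
bijection of strategy profiles, `σ : ∏ i, Y i` is a state of the iterated tensor
`⊗_{i=1}^n D_{1,Y i} : I ⇸ (∏ i, Y i, ℝⁿ)` over `k` if and only if `σ` is a pure Nash
equilibrium of the `n`-player normal form game with payoff function `k`. -/
theorem states_of_tensor_of_decisions_are_nash_equilibria
    (n : ℕ) (hn : 1 ≤ n) (Y : Fin n → Type)
    (k : (∀ i, Y i) → (Fin n → ℝ)) (σ : ∀ i, Y i) :
    (nashAux n Y).1.IsState ((nashAux n Y).2.symm σ) k ↔
      ∀ (j : Fin n) (y : Y j), k σ j ≥ k (Function.update σ j y) j :=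
  nash_key n Y k σ
end

section
/- Let n ≥ 1, let X₁,…,X_n be sets, and let k : ∏_{i=1}^n Xᵢ → ℝⁿ. For σ ∈ ∏_{i=1}^n (∏_{j<i} Xⱼ → Xᵢ), define continuations k_n := k and k_{i-1} := K(D^Δ_{X₁,…,Xᵢ}(σᵢ))(kᵢ) for 1 ≤ i ≤ n, i.e. k_{i-1}(x) = (kᵢ(x, σᵢ(x))₁, …, kᵢ(x, σᵢ(x))_{i-1}). Then each σᵢ is a state of D^Δ_{X₁,…,Xᵢ} over kᵢ for every 1 ≤ i ≤ n (equivalently, σ arises from a ⊙-separable state ⊙_{i=1}^n αᵢ of ⊙_{i=1}^n D^Δ_{X₁,…,Xᵢ} over k with each αᵢ a state of D^Δ_{X₁,…,Xᵢ}) if and only if σ is a subgame perfect equilibrium of the n-player sequential game with payoff function k: for all 1 ≤ i ≤ n, all x ∈ ∏_{j<i} Xⱼ and all xᵢ ∈ Xᵢ, k(v^σ_{x,σᵢ(x)})ᵢ ≥ k(v^σ_{x,xᵢ})ᵢ. -/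
/-- Strategy profiles of an `n`-player sequential game with choice sets `X i`:
for each `i`, a function `∏_{j<i} X j → X i`. -/
def SeqStrat (n : ℕ) (X : Fin n → Type) : Type :=
  ∀ i : Fin n, ((∀ j : Fin i.val, X (Fin.castLT j (j.isLt.trans i.isLt))) → X i)

/-- The strategic extension `v^σ` (auxiliary version, by course-of-values recursion). -/
def extendAux {n : ℕ} {X : Fin n → Type} (σ : SeqStrat n X) :
    (m : ℕ) → (h : m < n) → X ⟨m, h⟩
  | m, h => σ ⟨m, h⟩ (fun j => extendAux σ j.val (j.isLt.trans h))
  termination_by m _ => m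

/-- The strategic extension `v^σ` of the empty play: the play in which every player `i`
follows the strategy `σ i`. -/
def extendPlay {n : ℕ} {X : Fin n → Type} (σ : SeqStrat n X) : ∀ i : Fin n, X i :=
  fun i => extendAux σ i.val i.isLt

/-- The strategic extension `v^σ_{x, xi}` of the partial play `(x, xi)`, where `x` is a
partial play of length `i` and `xi` is the move played at position `i`; all later moves
follow `σ` (auxiliary version). -/
def deviateAux {n : ℕ} {X : Fin n → Type} (σ : SeqStrat n X) (i : Fin n)
    (x : ∀ j : Fin i.val, X (Fin.castLT j (j.isLt.trans i.isLt))) (xi : X i) :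
    (m : ℕ) → (h : m < n) → X ⟨m, h⟩
  | m, h =>
    if hm : m < i.val then x ⟨m, hm⟩
    else if hm' : m = i.val then
      cast (congrArg X (show i = (⟨m, h⟩ : Fin n) from Fin.ext hm'.symm)) xi
    else σ ⟨m, h⟩ (fun j => deviateAux σ i x xi j.val (j.isLt.trans h))
  termination_by m _ => m

/-- The strategic extension `v^σ_{x, xi}`. -/
def deviatePlay {n : ℕ} {X : Fin n → Type} (σ : SeqStrat n X) (i : Fin n)
    (x : ∀ j : Fin i.val, X (Fin.castLT j (j.isLt.trans i.isLt))) (xi : X i) :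
    ∀ l : Fin n, X l :=
  fun l => deviateAux σ i x xi l.val l.isLt

/-- The open game `D^Δ_{X₁,…,X_{n+1}} : (∏_{i≤n} X i, ℝⁿ) ⇸ (∏_{i≤n+1} X i, ℝ^{n+1})`. -/
def DDelta (n : ℕ) (X : Fin (n + 1) → Type) :
    OpenGame (∀ i : Fin n, X i.castSucc) (Fin n → ℝ)
      (∀ i : Fin (n + 1), X i) (Fin (n + 1) → ℝ) where
  Strat := (∀ i : Fin n, X i.castSucc) → X (Fin.last n)
  play := fun σ => ⟨fun x => Fin.snoc x (σ x), fun _ r => fun i => r i.castSucc⟩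
  B := fun h k _ σ'' => ∀ xn : X (Fin.last n),
    k (Fin.snoc h (σ'' h)) (Fin.last n) ≥ k (Fin.snoc h xn) (Fin.last n)

/-- The continuations `k_m` for `0 ≤ m ≤ n`, defined by downward recursion from `k_n = k`
by `k_{m}(x) = (k_{m+1}(x, σ_{m+1}(x))_1, …, k_{m+1}(x, σ_{m+1}(x))_m)`, i.e.
`k_m = K(D^Δ(σ_{m+1}))(k_{m+1})`. -/
def conts {n : ℕ} (X : Fin n → Type) (k : (∀ i, X i) → (Fin n → ℝ)) (σ : SeqStrat n X) :
    (m : ℕ) → (hm : m ≤ n) →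
      ((∀ j : Fin m, X (Fin.castLT j (j.isLt.trans_le hm))) → (Fin m → ℝ))
  | m, hm =>
    if heq : m = n then
      fun x i => k (fun l => x ⟨l.val, by omega⟩) ⟨i.val, by omega⟩
    else
      have hlt : m < n := lt_of_le_of_ne hm heq
      fun x i =>
        conts X k σ (m + 1) hlt
          (fun j =>
            if hj : j.val < m then x ⟨j.val, hj⟩
            else
              cast (congrArg X (show (⟨m, hlt⟩ : Fin n) = _ from
                Fin.ext (by have := j.isLt; simp; omega))) (σ ⟨m, hlt⟩ x))
          ⟨i.val, Nat.lt_succ_of_lt i.isLt⟩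
  termination_by m _ => n - m

section Aux

/-- Extend a partial play of length `m` by following `σ` from position `m` on. -/
def extFrom {n : ℕ} {X : Fin n → Type} (σ : SeqStrat n X) (m : ℕ) (hm : m ≤ n)
    (x : ∀ j : Fin m, X ⟨j.val, j.isLt.trans_le hm⟩) :
    (l : ℕ) → (hl : l < n) → X ⟨l, hl⟩
  | l, hl =>
    if h : l < m then x ⟨l, h⟩
    else σ ⟨l, hl⟩ (fun j => extFrom σ m hm x j.val (j.isLt.trans hl))
  termination_by l _ => l

theorem extFrom_succ {n : ℕ} {X : Fin n → Type} (σ : SeqStrat n X) (m : ℕ)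
    (hlt : m < n) (hm : m ≤ n)
    (x : ∀ j : Fin m, X ⟨j.val, j.isLt.trans_le hm⟩)
    (x' : ∀ j : Fin (m + 1), X ⟨j.val, j.isLt.trans_le hlt⟩)
    (hx : ∀ (j : ℕ) (hj : j < m) (hj' : j < m + 1), x' ⟨j, hj'⟩ = x ⟨j, hj⟩)
    (hx' : x' ⟨m, Nat.lt_succ_self m⟩ = σ ⟨m, hlt⟩ x) :
    ∀ (l : ℕ) (hl : l < n),
      extFrom σ (m + 1) hlt x' l hl = extFrom σ m hm x l hl := by
  intro l
  induction l using Nat.strong_induction_on with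
  | _ l IH =>
    intro hl
    rw [extFrom, extFrom]
    by_cases h : l < m
    · rw [dif_pos h, dif_pos (Nat.lt_succ_of_lt h), hx]
    · rw [dif_neg h]
      by_cases h' : l = m
      · subst h'
        rw [dif_pos (Nat.lt_succ_self l), hx']
        congr 1
        funext j
        rw [extFrom, dif_pos j.isLt]
      · rw [dif_neg (by omega : ¬ l < m + 1)]
        congr 1
        funext j
        exact IH j.val j.isLt (j.isLt.trans hl)

theorem conts_eq {n : ℕ} (X : Fin n → Type) (k : (∀ i, X i) → (Fin n → ℝ))
    (σ : SeqStrat n X) :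
    ∀ (d m : ℕ), n - m ≤ d → ∀ (hm : m ≤ n)
      (x : ∀ j : Fin m, X ⟨j.val, j.isLt.trans_le hm⟩) (i : Fin m),
      conts X k σ m hm x i
        = k (fun l => extFrom σ m hm x l.val l.isLt) ⟨i.val, i.isLt.trans_le hm⟩ := by
  intro d
  induction d with
  | zero =>
    intro m hd hm x i
    have heq : m = n := by omega
    subst heq
    rw [conts, dif_pos rfl]
    congr 1
    funext l
    rw [extFrom, dif_pos l.isLt]
  | succ d IH =>
    intro m hd hm x i
    by_cases heq : m = n
    · subst heq
      rw [conts, dif_pos rfl]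
      congr 1
      funext l
      rw [extFrom, dif_pos l.isLt]
    · have hlt : m < n := lt_of_le_of_ne hm heq
      have step : conts X k σ m hm x i =
          conts X k σ (m + 1) hlt
            (fun j => if hj : j.val < m then x ⟨j.val, hj⟩
              else cast (congrArg X (Fin.ext (show m = j.val by
                have := j.isLt; omega))) (σ ⟨m, hlt⟩ x))
            ⟨i.val, Nat.lt_succ_of_lt i.isLt⟩ := by
        rw [conts, dif_neg heq]
      rw [step, IH (m + 1) (by omega) hlt _ ⟨i.val, Nat.lt_succ_of_lt i.isLt⟩]
      congr 1
      funext l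
      exact extFrom_succ σ m hlt hm x _
        (fun j hj hj' => dif_pos hj)
        (by rw [dif_neg (lt_irrefl m)]; exact eq_of_heq (cast_heq _ _)) l.val l.isLt

theorem extFrom_snoc {n : ℕ} {X : Fin n → Type} (σ : SeqStrat n X) (i : Fin n)
    (x : ∀ j : Fin i.val, X ⟨j.val, j.isLt.trans i.isLt⟩) (xi : X i) :
    ∀ (l : ℕ) (hl : l < n),
      extFrom σ (i.val + 1) i.isLt
        (Fin.snoc (α := fun j : Fin (i.val + 1) => X ⟨j.val, j.isLt.trans_le i.isLt⟩) x xi)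
        l hl = deviateAux σ i x xi l hl := by
  intro l
  induction l using Nat.strong_induction_on with
  | _ l IH =>
    intro hl
    rw [extFrom, deviateAux]
    by_cases h : l < i.val
    · rw [dif_pos (Nat.lt_succ_of_lt h), dif_pos h]
      exact Fin.snoc_castSucc (α := fun j : Fin (i.val + 1) => X ⟨j.val, j.isLt.trans_le i.isLt⟩)
        xi x ⟨l, h⟩
    · rw [dif_neg h]
      by_cases h' : l = i.val
      · rw [dif_pos (by omega : l < i.val + 1), dif_pos h']
        subst h'
        refine Eq.trans ?_ (eq_of_heq (cast_heq _ _)).symm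
        exact Fin.snoc_last (α := fun j : Fin (i.val + 1) =>
          X ⟨j.val, j.isLt.trans_le i.isLt⟩) xi x
      · rw [dif_neg (by omega : ¬ l < i.val + 1), dif_neg h']
        congr 1
        funext j
        exact IH j.val j.isLt (j.isLt.trans hl)

theorem conts_snoc {n : ℕ} (X : Fin n → Type) (k : (∀ i, X i) → (Fin n → ℝ))
    (σ : SeqStrat n X) (i : Fin n)
    (x : ∀ j : Fin i.val, X ⟨j.val, j.isLt.trans i.isLt⟩) (xi : X i) :
    conts X k σ (i.val + 1) i.isLt
      (Fin.snoc (α := fun j : Fin (i.val + 1) => X ⟨j.val, j.isLt.trans_le i.isLt⟩) x xi)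
      (Fin.last i.val) = k (deviatePlay σ i x xi) i := by
  rw [conts_eq X k σ (n - (i.val + 1)) (i.val + 1) le_rfl i.isLt]
  congr 1
  · funext l
    exact extFrom_snoc σ i x xi l.val l.isLt

end Aux

/-- Subgame perfection theorem: each `σ i` is a state of `D^Δ_{X₁,…,X_{i}}` over the
continuation `k_i` (equivalently, `σ` arises from a `⊙`-separable state of the iterated
composite `⊙_{i=1}^n D^Δ_{X₁,…,X_i}` over `k`) if and only if `σ` is a subgame perfect
equilibrium of the `n`-player sequential game with payoff function `k`: for all players
`i`, all subgames `x` and all deviations `x_i`, `k(v^σ_{x,σ_i(x)})_i ≥ k(v^σ_{x,x_i})_i`. -/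
theorem separable_states_are_subgame_perfect_equilibria
    (n : ℕ) (hn : 1 ≤ n) (X : Fin n → Type)
    (k : (∀ i, X i) → (Fin n → ℝ)) (σ : SeqStrat n X) :
    (∀ i : Fin n,
      (DDelta i.val (fun j => X ⟨j.val, Nat.lt_of_lt_of_le j.isLt i.isLt⟩)).IsState
        (σ i) (conts X k σ (i.val + 1) i.isLt)) ↔
    (∀ (i : Fin n) (x : ∀ j : Fin i.val, X (Fin.castLT j (j.isLt.trans i.isLt))) (xi : X i),
      k (deviatePlay σ i x (σ i x)) i ≥ k (deviatePlay σ i x xi) i) := by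
  constructor
  · intro H i x xi
    have h := H i x xi
    rw [conts_snoc, conts_snoc] at h
    exact h
  · intro H i x xn
    rw [conts_snoc, conts_snoc]
    exact H i x xn
end

section
/- Let (G_i : (X_i, S) ⇸ (Y_i, R))_{i∈I} be a family of open games and let ∏_{i∈I} G_i : (∐_i X_i, S) ⇸ (∐_i Y_i, R) be their product, with Σ(∏_i G_i) = ∏_i Σ(G_i), (∏_i G_i)(σ) the lens with view ι_j(x) ↦ ι_j(v_{G_j(σ_j)}(x)) and update (ι_j(x), r) ↦ u_{G_j(σ_j)}(x, r), and (σ,σ') ∈ B_{∏_i G_i}(ι_j(h), k) iff (σ_j, σ'_j) ∈ B_{G_j}(h, k ∘ ι_j). Then a pair (σ, k) with σ ∈ ∏_i Σ(G_i) and k : ∐_i Y_i → R is a state of ∏_i G_i (i.e. σ is a state over k) if and only if, for every i ∈ I, (σ_i, k ∘ ι_i) is a state of G_i. Consequently the map (σ,k) ↦ ((σ_i, k∘ι_i))_{i∈I} is a bijection from states of ∏_i G_i to families of states of the G_i. -/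
/-- The product of a family of open games `G i : (X i, S) ⇸ (Y i, R)` with common
contravariant boundary: the open game `(∐ i, X i, S) ⇸ (∐ i, Y i, R)` with strategy
profiles `∏ i, Σ(G i)`, plays acting componentwise on the coproducts, and best response at
a history `ι_j h` given by the best response of `G j`. -/
def prodGame {I : Type} {X Y : I → Type} {S R : Type}
    (G : ∀ i : I, OpenGame (X i) S (Y i) R) :
    OpenGame (Σ i : I, X i) S (Σ i : I, Y i) R where
  Strat := ∀ i : I, (G i).Strat
  play := fun σ =>
    ⟨fun x => ⟨x.1, ((G x.1).play (σ x.1)).v x.2⟩,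
     fun x r => ((G x.1).play (σ x.1)).u x.2 r⟩
  B := fun h k σ σ' => (G h.1).B h.2 (fun y => k ⟨h.1, y⟩) (σ h.1) (σ' h.1)

/-- The projection morphism `π_j : ∏ i, G i → G j`, whose `s`- and `t`-components are the
lenses given by the coproduct inclusion and second projection, and whose `Σ`-component is
the product projection. -/
def prodGameProj {I : Type} {X Y : I → Type} {S R : Type}
    (G : ∀ i : I, OpenGame (X i) S (Y i) R) (j : I) :
    OGMor (prodGame G) (G j) where
  s := ⟨fun x => ⟨j, x⟩, fun _ s => s⟩
  t := ⟨fun y => ⟨j, y⟩, fun _ r => r⟩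
  f := fun σ => σ j
  comm := fun _ => rfl
  best := fun _ _ _ _ hB => hB

/-- A pair `(σ, k)` is a state of the product `∏ i, G i` iff for every `i`, `(σ i, k ∘ ι_i)`
is a state of `G i`; consequently `(σ, k) ↦ ((σ i, k ∘ ι_i))_i` is a bijection from states
of `∏ i, G i` to families of states of the `G i`. -/
theorem states_of_prodGame {I : Type} {X Y : I → Type} {S R : Type}
    (G : ∀ i : I, OpenGame (X i) S (Y i) R) :
    (∀ (σ : ∀ i : I, (G i).Strat) (k : (Σ i : I, Y i) → R),
      (prodGame G).IsState σ k ↔ ∀ i : I, (G i).IsState (σ i) (fun y => k ⟨i, y⟩)) ∧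
    (∃ e : { p : (∀ i : I, (G i).Strat) × ((Σ i : I, Y i) → R) //
              (prodGame G).IsState p.1 p.2 } ≃
           (∀ i : I, { q : (G i).Strat × (Y i → R) // (G i).IsState q.1 q.2 }),
      ∀ p i, ((e p) i : ((G i).Strat × (Y i → R))) = (p.1.1 i, fun y => p.1.2 ⟨i, y⟩)) := by
  have key : ∀ (σ : ∀ i : I, (G i).Strat) (k : (Σ i : I, Y i) → R),
      (prodGame G).IsState σ k ↔ ∀ i : I, (G i).IsState (σ i) (fun y => k ⟨i, y⟩) := by
    intro σ k
    constructor
    · intro hs i h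
      exact hs ⟨i, h⟩
    · intro hs h
      exact hs h.1 h.2
  refine ⟨key, ⟨⟨fun p i => ⟨(p.1.1 i, fun y => p.1.2 ⟨i, y⟩), (key _ _).1 p.2 i⟩,
      fun q => ⟨(fun i => (q i).1.1, fun y => (q (y.1)).1.2 y.2),
        (key _ _).2 (fun i => (q i).2)⟩, ?_, ?_⟩, fun p i => rfl⟩⟩
  · rintro ⟨⟨σ, k⟩, hp⟩
    exact Subtype.ext (Prod.ext rfl (funext fun y => by cases y; rfl))
  · intro q
    funext i
    apply Subtype.ext
    rfl
end
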